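/- In the brush/unfolding setup, assume additionally that ω ⊆ B_{ℝ^N}(0,R₁) and Y ⊆ B_{ℝ^N}(0,R₁) × (0,L) for some R₁, L > 0, and that all scales satisfy l^n ≤ ε for some ε > 0. Let φ : ℝ^N → ℝ be Lipschitz with constant K, let ψ ∈ L²(Y), and define U(φ,ψ) : Ω^a → ℝ by U(φ,ψ)(x,y) = φ(x) ψ((x − x̄^n)/l^n, y) for (x,y) ∈ Y^n. Then ∫_W |τ(U(φ,ψ))(x,ξ,y) − χ_{ω_+}(x) φ(x) ψ(ξ,y)|² dx dξ dy ≤ (2 R₁ K ε)² λ_N(Ω') ‖ψ‖²_{L²(Y)}, where χ_{ω_+} is the indicator function of ω_+. -/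

import Mathlib

open MeasureTheory Set Bornology

noncomputable section

/-- The tooth `Y^n = {(c + s ξ, y) : (ξ,y) ∈ Y}`. -/
def tooth {N : ℕ} (Y : Set ((Fin N → ℝ) × ℝ)) (c : Fin N → ℝ) (s : ℝ) :
    Set ((Fin N → ℝ) × ℝ) :=
  (fun p : (Fin N → ℝ) × ℝ => (c + s • p.1, p.2)) '' Y

/-- The base `ω^n = c + s ω` of a tooth. -/
def toothBase {N : ℕ} (ω : Set (Fin N → ℝ)) (c : Fin N → ℝ) (s : ℝ) :
    Set (Fin N → ℝ) :=
  (fun ξ : Fin N → ℝ => c + s • ξ) '' ω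

/-- `T` is the unfolding `τφ` of `φ`. -/
def IsUnfolding {N M : ℕ} (ω : Set (Fin N → ℝ)) (xb : Fin M → Fin N → ℝ)
    (l : Fin M → ℝ) (φ : (Fin N → ℝ) × ℝ → ℝ)
    (T : (Fin N → ℝ) × ((Fin N → ℝ) × ℝ) → ℝ) : Prop :=
  (∀ n : Fin M, ∀ x ∈ toothBase ω (xb n) (l n),
      ∀ q : (Fin N → ℝ) × ℝ, T (x, q) = φ (xb n + l n • q.1, q.2)) ∧
  (∀ x ∉ ⋃ n, toothBase ω (xb n) (l n), ∀ q : (Fin N → ℝ) × ℝ, T (x, q) = 0)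

/-- For the adapted test function `U(φ,ψ)(x,y) = φ(x)ψ((x−x̄ⁿ)/lⁿ, y)`
with `φ` Lipschitz of constant `K` and `ψ ∈ L²(Y)`, one has
`∫_W |τ(U(φ,ψ)) − χ_{ω₊} φ ψ|² ≤ (2R₁Kε)² λ_N(Ω') ‖ψ‖²_{L²(Y)}`. -/
theorem stmt_17 {N M : ℕ}
    (Ω' : Set (Fin N → ℝ)) (hΩ'o : IsOpen Ω') (hΩ'b : IsBounded Ω')
    (Y : Set ((Fin N → ℝ) × ℝ)) (hYo : IsOpen Y) (hYne : Y.Nonempty)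
    (R₁ L : ℝ) (hR₁ : 0 < R₁) (hL : 0 < L)
    (hYsub : Y ⊆ Metric.ball (0 : Fin N → ℝ) R₁ ×ˢ Set.Ioo (0 : ℝ) L)
    (ω : Set (Fin N → ℝ)) (hωm : MeasurableSet ω)
    (hωsub : ω ⊆ Metric.ball (0 : Fin N → ℝ) R₁) (hωvol : volume ω = 1)
    (xb : Fin M → Fin N → ℝ) (l : Fin M → ℝ) (ε : ℝ) (hε : 0 < ε)
    (hl : ∀ n, 0 < l n ∧ l n ≤ ε)
    (hbase : ∀ n, toothBase ω (xb n) (l n) ⊆ Ω')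
    (hbdisj : ∀ m n : Fin M, m ≠ n →
      Disjoint (toothBase ω (xb m) (l m)) (toothBase ω (xb n) (l n)))
    (htdisj : ∀ m n : Fin M, m ≠ n →
      Disjoint (tooth Y (xb m) (l m)) (tooth Y (xb n) (l n)))
    (K : NNReal) (φ : (Fin N → ℝ) → ℝ) (hφ : LipschitzWith K φ)
    (ψ : (Fin N → ℝ) × ℝ → ℝ) (hψ : MemLp ψ 2 (volume.restrict Y))
    (Uf : (Fin N → ℝ) × ℝ → ℝ)
    (hUf : ∀ n : Fin M, ∀ z ∈ tooth Y (xb n) (l n),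
      Uf z = φ z.1 * ψ ((l n)⁻¹ • (z.1 - xb n), z.2))
    (T : (Fin N → ℝ) × ((Fin N → ℝ) × ℝ) → ℝ)
    (hT : IsUnfolding ω xb l Uf T) :
    ∫⁻ z in Ω' ×ˢ Y,
        ENNReal.ofReal
          ((T z -
            Set.indicator (⋃ n, toothBase ω (xb n) (l n)) (fun _ => (1 : ℝ)) z.1 *
              φ z.1 * ψ z.2) ^ 2)
      ≤ ENNReal.ofReal
          ((2 * R₁ * (K : ℝ) * ε) ^ 2 * (volume Ω').toReal * ∫ q in Y, ψ q ^ 2) := by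
  classical
  set C : ℝ := 2 * R₁ * (K : ℝ) * ε with hCdef
  have hC0 : 0 ≤ C := by positivity
  -- trivial case : Ω' has measure zero
  by_cases hzero : volume Ω' = 0
  · have h0 : (volume : Measure ((Fin N → ℝ) × ((Fin N → ℝ) × ℝ))).restrict (Ω' ×ˢ Y) = 0 := by
      refine Measure.restrict_eq_zero.2 ?_
      rw [Measure.volume_eq_prod, Measure.prod_prod, hzero, zero_mul]
    rw [h0, lintegral_zero_measure]
    exact zero_le
  have hfin : volume Ω' ≠ ⊤ := hΩ'b.measure_lt_top.ne
  -- pointwise bound on Ω' ×ˢ Y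
  have key : ∀ z ∈ Ω' ×ˢ Y,
      ENNReal.ofReal
          ((T z -
            Set.indicator (⋃ n, toothBase ω (xb n) (l n)) (fun _ => (1 : ℝ)) z.1 *
              φ z.1 * ψ z.2) ^ 2)
        ≤ ENNReal.ofReal (C ^ 2 * ψ z.2 ^ 2) := by
    rintro ⟨x, q⟩ ⟨hx, hq⟩
    by_cases hmem : x ∈ ⋃ n, toothBase ω (xb n) (l n)
    · rw [Set.mem_iUnion] at hmem
      obtain ⟨n, hn⟩ := hmem
      obtain ⟨ξ, hξ, rfl⟩ := hn
      have hln := (hl n).1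
      set x : Fin N → ℝ := xb n + l n • ξ with hxdef
      have hmem' : x ∈ ⋃ m, toothBase ω (xb m) (l m) :=
        Set.mem_iUnion.2 ⟨n, ⟨ξ, hξ, rfl⟩⟩
      have hTz : T (x, q) = Uf (xb n + l n • q.1, q.2) := hT.1 n x ⟨ξ, hξ, rfl⟩ q
      have htooth : (xb n + l n • q.1, q.2) ∈ tooth Y (xb n) (l n) := ⟨q, hq, rfl⟩
      have hUfv := hUf n _ htooth
      have harg : (l n)⁻¹ • ((xb n + l n • q.1) - xb n) = q.1 := by
        rw [add_sub_cancel_left, inv_smul_smul₀ hln.ne']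
      have hUfv' : Uf (xb n + l n • q.1, q.2) = φ (xb n + l n • q.1) * ψ q := by
        rw [hUfv]
        simp only [harg]
      -- Lipschitz bound
      have hq1 : ‖q.1‖ < R₁ := by
        have := (hYsub hq).1
        simpa [mem_ball_zero_iff] using this
      have hξn : ‖ξ‖ < R₁ := by
        have := hωsub hξ
        simpa [mem_ball_zero_iff] using this
      have hdax : dist (xb n + l n • q.1) x ≤ ε * (2 * R₁) := by
        have hsub : (xb n + l n • q.1) - x = l n • (q.1 - ξ) := by
          rw [smul_sub, hxdef]; abel
        rw [dist_eq_norm, hsub, norm_smul, Real.norm_eq_abs, abs_of_pos hln]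
        have h1 : ‖q.1 - ξ‖ ≤ 2 * R₁ :=
          le_trans (norm_sub_le _ _) (by linarith)
        exact mul_le_mul (hl n).2 h1 (norm_nonneg _) hε.le
      have habs : |φ (xb n + l n • q.1) - φ x| ≤ C := by
        have h1 := hφ.dist_le_mul (xb n + l n • q.1) x
        rw [Real.dist_eq] at h1
        have h2 : (K : ℝ) * dist (xb n + l n • q.1) x ≤ (K : ℝ) * (ε * (2 * R₁)) :=
          mul_le_mul_of_nonneg_left hdax K.coe_nonneg
        have h3 : (K : ℝ) * (ε * (2 * R₁)) = C := by rw [hCdef]; ring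
        linarith
      apply ENNReal.ofReal_le_ofReal
      have hre : T (x, q) -
          Set.indicator (⋃ m, toothBase ω (xb m) (l m)) (fun _ => (1 : ℝ)) x *
            φ x * ψ q = (φ (xb n + l n • q.1) - φ x) * ψ q := by
        rw [Set.indicator_of_mem hmem', hTz, hUfv']; ring
      rw [hre, mul_pow]
      have hsq : (φ (xb n + l n • q.1) - φ x) ^ 2 ≤ C ^ 2 := by
        have h := abs_le.1 habs
        exact sq_le_sq' h.1 h.2
      exact mul_le_mul_of_nonneg_right hsq (sq_nonneg _)
    · have hTz : T (x, q) = 0 := hT.2 x hmem q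
      rw [Set.indicator_of_notMem hmem, hTz]
      simp only [zero_mul, mul_zero, sub_zero]
      rw [show ((0 : ℝ)) ^ 2 = 0 by ring, ENNReal.ofReal_zero]
      exact zero_le
  -- integrate the pointwise bound
  have step1 : ∫⁻ z in Ω' ×ˢ Y,
      ENNReal.ofReal
          ((T z -
            Set.indicator (⋃ n, toothBase ω (xb n) (l n)) (fun _ => (1 : ℝ)) z.1 *
              φ z.1 * ψ z.2) ^ 2)
      ≤ ∫⁻ z in Ω' ×ˢ Y, ENNReal.ofReal (C ^ 2 * ψ z.2 ^ 2) := by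
    refine lintegral_mono_ae ?_
    refine (ae_restrict_iff' (hΩ'o.measurableSet.prod hYo.measurableSet)).2 ?_
    exact Filter.Eventually.of_forall key
  refine step1.trans ?_
  -- compute the right-hand integral
  set μ : Measure (Fin N → ℝ) := volume.restrict Ω' with hμdef
  set ν : Measure ((Fin N → ℝ) × ℝ) := volume.restrict Y with hνdef
  have hrest : (volume : Measure ((Fin N → ℝ) × ((Fin N → ℝ) × ℝ))).restrict (Ω' ×ˢ Y)
      = μ.prod ν := by
    rw [Measure.volume_eq_prod, hμdef, hνdef, Measure.prod_restrict]
  set g : (Fin N → ℝ) × ℝ → ENNReal := fun q => ENNReal.ofReal (ψ q ^ 2) with hgdef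
  have hg : AEMeasurable g ν := by
    have hψm : AEMeasurable ψ ν := hψ.aestronglyMeasurable.aemeasurable
    exact ENNReal.measurable_ofReal.comp_aemeasurable (hψm.pow_const 2)
  have hμuniv : μ Set.univ = volume Ω' := by
    rw [hμdef, Measure.restrict_apply_univ]
  have hmap : (μ.prod ν).map Prod.snd = volume Ω' • ν := by
    rw [Measure.map_snd_prod, hμuniv]
  have hg' : AEMeasurable g ((μ.prod ν).map Prod.snd) := by
    rw [hmap]
    exact (aemeasurable_smul_measure_iff hzero).2 hg
  have hsnd : ∫⁻ z in Ω' ×ˢ Y, ENNReal.ofReal (ψ z.2 ^ 2)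
      = volume Ω' * ∫⁻ q in Y, ENNReal.ofReal (ψ q ^ 2) := by
    rw [hrest]
    calc ∫⁻ z, ENNReal.ofReal (ψ z.2 ^ 2) ∂(μ.prod ν)
        = ∫⁻ q, g q ∂((μ.prod ν).map Prod.snd) :=
          (lintegral_map' hg' measurable_snd.aemeasurable).symm
      _ = volume Ω' * ∫⁻ q, g q ∂ν := by rw [hmap, lintegral_smul_measure, smul_eq_mul]
      _ = volume Ω' * ∫⁻ q in Y, ENNReal.ofReal (ψ q ^ 2) := rfl
  have hIψ : ∫⁻ q in Y, ENNReal.ofReal (ψ q ^ 2)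
      = ENNReal.ofReal (∫ q in Y, ψ q ^ 2) := by
    rw [ofReal_integral_eq_lintegral_ofReal hψ.integrable_sq
      (Filter.Eventually.of_forall fun q => sq_nonneg _)]
  have hcompute : ∫⁻ z in Ω' ×ˢ Y, ENNReal.ofReal (C ^ 2 * ψ z.2 ^ 2)
      = ENNReal.ofReal (C ^ 2) * (volume Ω' * ENNReal.ofReal (∫ q in Y, ψ q ^ 2)) := by
    simp_rw [ENNReal.ofReal_mul (sq_nonneg C)]
    rw [lintegral_const_mul' _ _ ENNReal.ofReal_ne_top, hsnd, hIψ]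
  rw [hcompute]
  have hInn : 0 ≤ ∫ q in Y, ψ q ^ 2 :=
    integral_nonneg fun q => sq_nonneg _
  have hRHS : ENNReal.ofReal (C ^ 2 * (volume Ω').toReal * ∫ q in Y, ψ q ^ 2)
      = ENNReal.ofReal (C ^ 2) * (volume Ω' * ENNReal.ofReal (∫ q in Y, ψ q ^ 2)) := by
    rw [ENNReal.ofReal_mul (by positivity : (0:ℝ) ≤ C ^ 2 * (volume Ω').toReal),
      ENNReal.ofReal_mul (sq_nonneg C), ENNReal.ofReal_toReal hfin, mul_assoc]
  rw [hRHS]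

end
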